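/- arXiv:1406.0526 — 2 statements merged into one kernel-verified Lean document; each statement's English description precedes it below -/
import Mathlib

section
/- Let F be a continuous CDF and F_0 a continuous CDF with F ≠ F_0, and let q be a strictly positive bounded-below-on-compacts function on (0,1) (i.e., inf_{ε ≤ u ≤ 1−ε} q(u) > 0 for all 0 < ε < 1/2). If X_1, X_2, … are i.i.d. with CDF F and 𝔽_n is their empirical distribution function, then T_n(q) = sup_{0 < F_0(t) < 1} √n |𝔽_n(t) − F_0(t)| / q(F_0(t)) converges to +∞ in probability as n → ∞. -/
open MeasureTheory ProbabilityTheory Filter Real Set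

theorem weighted_KS_consistency {Ω : Type*} [MeasurableSpace Ω]
    (μ : Measure Ω) [IsProbabilityMeasure μ]
    (F F₀ : ℝ → ℝ)
    (hFcont : Continuous F) (hFmono : Monotone F)
    (hF0 : Tendsto F atBot (nhds 0)) (hF1 : Tendsto F atTop (nhds 1))
    (hF₀cont : Continuous F₀) (hF₀mono : Monotone F₀)
    (hF₀0 : Tendsto F₀ atBot (nhds 0)) (hF₀1 : Tendsto F₀ atTop (nhds 1))
    (hne : F ≠ F₀)
    (q : ℝ → ℝ)
    (hq : ∀ ε : ℝ, 0 < ε → ε < 1/2 → ∃ c > 0, ∀ u ∈ Set.Icc ε (1 - ε), c ≤ q u)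
    (X : ℕ → Ω → ℝ) (hmeas : ∀ i, Measurable (X i))
    (hindep : iIndepFun X μ)
    (hcdf : ∀ i t, (μ {ω | X i ω ≤ t}).toReal = F t) :
    ∀ M : ℝ,
      Tendsto (fun n : ℕ =>
          (μ {ω | ∀ t : ℝ, 0 < F₀ t → F₀ t < 1 →
              Real.sqrt n *
                |(↑n)⁻¹ * ∑ i ∈ Finset.range n, (if X i ω ≤ t then (1:ℝ) else 0) - F₀ t|
                / q (F₀ t) ≤ M}).toReal)
        atTop (nhds 0) := by
  intro M
  -- basic bounds on F and F₀
  have hF_nonneg : ∀ t, 0 ≤ F t := fun t =>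
    le_of_tendsto hF0 (eventually_atBot.2 ⟨t, fun s hs => hFmono hs⟩)
  have hF_le1 : ∀ t, F t ≤ 1 := fun t =>
    ge_of_tendsto hF1 (eventually_atTop.2 ⟨t, fun s hs => hFmono hs⟩)
  have hF₀_nonneg : ∀ t, 0 ≤ F₀ t := fun t =>
    le_of_tendsto hF₀0 (eventually_atBot.2 ⟨t, fun s hs => hF₀mono hs⟩)
  have hF₀_le1 : ∀ t, F₀ t ≤ 1 := fun t =>
    ge_of_tendsto hF₀1 (eventually_atTop.2 ⟨t, fun s hs => hF₀mono hs⟩)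
  -- find a point t₀ with 0 < F₀ t₀ < 1 and F t₀ ≠ F₀ t₀
  obtain ⟨t₀, hp0, hp1, hnet⟩ : ∃ t, 0 < F₀ t ∧ F₀ t < 1 ∧ F t ≠ F₀ t := by
    obtain ⟨s, hs⟩ := Function.ne_iff.mp hne
    rcases eq_or_lt_of_le (hF₀_nonneg s) with h0 | h0
    · -- F₀ s = 0, so F s > 0
      have hFs : 0 < F s := lt_of_le_of_ne (hF_nonneg s) (by
        intro h; exact hs (h ▸ h0.symm ▸ rfl))
      set c : ℝ := min (F s) 1 / 2 with hc_def
      have hc0 : 0 < c := by positivity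
      have hc1 : c < 1 := by
        have : min (F s) 1 ≤ 1 := min_le_right _ _
        simp only [hc_def]; linarith
      have hcFs : c < F s := by
        have : min (F s) 1 ≤ F s := min_le_left _ _
        have h2 : 0 < min (F s) 1 := lt_min hFs one_pos
        simp only [hc_def]; linarith
      obtain ⟨u, hu1, hu2⟩ := ((hF₀1.eventually (eventually_gt_nhds hc1)).and
        (eventually_ge_atTop s)).exists
      have hsu : s ≤ u := hu2
      have hmem : c ∈ Icc (F₀ s) (F₀ u) := ⟨by rw [← h0]; exact hc0.le, hu1.le⟩
      obtain ⟨t, ht_mem, ht⟩ := intermediate_value_Icc hsu hF₀cont.continuousOn hmem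
      refine ⟨t, by rw [ht]; exact hc0, by rw [ht]; exact hc1, ?_⟩
      rw [ht]
      have : F s ≤ F t := hFmono ht_mem.1
      intro h; rw [← h] at hcFs; linarith
    · rcases lt_or_eq_of_le (hF₀_le1 s) with h1 | h1
      · exact ⟨s, h0, h1, hs⟩
      · -- F₀ s = 1, so F s < 1
        have hFs : F s < 1 := lt_of_le_of_ne (hF_le1 s) (fun h => hs (h.trans h1.symm))
        set c : ℝ := (F s + 1) / 2 with hc_def
        have hc0 : 0 < c := by have := hF_nonneg s; simp only [hc_def]; linarith
        have hc1 : c < 1 := by simp only [hc_def]; linarith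
        have hcFs : F s < c := by simp only [hc_def]; linarith
        obtain ⟨u, hu1, hu2⟩ := ((hF₀0.eventually (eventually_lt_nhds hc0)).and
          (eventually_le_atBot s)).exists
        have hus : u ≤ s := hu2
        have hmem : c ∈ Icc (F₀ u) (F₀ s) := ⟨hu1.le, by rw [h1]; exact hc1.le⟩
        obtain ⟨t, ht_mem, ht⟩ := intermediate_value_Icc hus hF₀cont.continuousOn hmem
        refine ⟨t, by rw [ht]; exact hc0, by rw [ht]; exact hc1, ?_⟩
        rw [ht]
        have : F t ≤ F s := hFmono ht_mem.2
        intro h; rw [h] at this; linarith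
  set p : ℝ := F₀ t₀ with hp_def
  set a : ℝ := F t₀ with ha_def
  set δ : ℝ := |a - p| with hδ_def
  have hδ0 : 0 < δ := abs_pos.mpr (sub_ne_zero.mpr hnet)
  -- lower bound for q at p
  have hqp : 0 < q p := by
    set ε : ℝ := min p (1 - p) / 2 with hε_def
    have hε0 : 0 < ε := by
      have : 0 < min p (1 - p) := lt_min hp0 (by linarith)
      simp only [hε_def]; linarith
    have hε2 : ε < 1 / 2 := by
      have h1 : min p (1 - p) ≤ p := min_le_left _ _
      have h2 : min p (1 - p) ≤ 1 - p := min_le_right _ _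
      simp only [hε_def]; linarith
    obtain ⟨c, hc0, hc⟩ := hq ε hε0 hε2
    have hp_mem : p ∈ Icc ε (1 - ε) := by
      constructor
      · have : min p (1 - p) ≤ p := min_le_left _ _
        simp only [hε_def]
        have h3 := lt_min hp0 (show (0:ℝ) < 1 - p by linarith)
        linarith
      · have h2 : min p (1 - p) ≤ 1 - p := min_le_right _ _
        simp only [hε_def]; linarith
    exact lt_of_lt_of_le hc0 (hc p hp_mem)
  -- the Bernoulli random variables
  set Y : ℕ → Ω → ℝ := fun i ω => if X i ω ≤ t₀ then (1:ℝ) else 0 with hY_def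
  have hsetmeas : ∀ i, MeasurableSet {ω | X i ω ≤ t₀} := fun i =>
    measurableSet_le (hmeas i) measurable_const
  have hYmeas : ∀ i, Measurable (Y i) := fun i =>
    Measurable.ite (hsetmeas i) measurable_const measurable_const
  have hYbd : ∀ i ω, ‖Y i ω‖ ≤ 1 := by
    intro i ω; simp only [hY_def]; split <;> simp
  have hYint : Integrable (Y 0) μ :=
    (integrable_const (1:ℝ)).mono' (hYmeas 0).aestronglyMeasurable
      (ae_of_all _ (hYbd 0))
  -- X's are identically distributed
  have hXid : ∀ i, IdentDistrib (X i) (X 0) μ μ := by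
    intro i
    refine ⟨(hmeas i).aemeasurable, (hmeas 0).aemeasurable, ?_⟩
    haveI : IsProbabilityMeasure (μ.map (X i)) :=
      Measure.isProbabilityMeasure_map (hmeas i).aemeasurable
    haveI : IsProbabilityMeasure (μ.map (X 0)) :=
      Measure.isProbabilityMeasure_map (hmeas 0).aemeasurable
    apply Measure.ext_of_Iic
    intro t
    rw [Measure.map_apply (hmeas i) measurableSet_Iic,
      Measure.map_apply (hmeas 0) measurableSet_Iic]
    have h1 : (μ (X i ⁻¹' Iic t)).toReal = F t := hcdf i t
    have h2 : (μ (X 0 ⁻¹' Iic t)).toReal = F t := hcdf 0 t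
    exact (ENNReal.toReal_eq_toReal_iff' (measure_ne_top μ _) (measure_ne_top μ _)).mp
      (h1.trans h2.symm)
  -- Y's are identically distributed
  have hf_meas : Measurable (fun x : ℝ => if x ≤ t₀ then (1:ℝ) else 0) :=
    Measurable.ite measurableSet_Iic measurable_const measurable_const
  have hYid : ∀ i, IdentDistrib (Y i) (Y 0) μ μ := fun i => (hXid i).comp hf_meas
  -- Y's are pairwise independent
  have hYindep : Pairwise (Function.onFun (IndepFun · · μ) Y) := by
    intro i j hij
    exact (hindep.indepFun hij).comp hf_meas hf_meas
  -- expectation of Y 0 is a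
  have hEY : μ[Y 0] = a := by
    have h1 : (Y 0) = Set.indicator {ω | X 0 ω ≤ t₀} (fun _ => (1:ℝ)) := by
      funext ω
      simp only [hY_def, Set.indicator_apply, Set.mem_setOf_eq]
    rw [h1, integral_indicator_const (1:ℝ) (hsetmeas 0), smul_eq_mul, mul_one,
      measureReal_def, hcdf 0 t₀]
  -- strong law of large numbers
  have hslln : ∀ᵐ ω ∂μ, Tendsto (fun n : ℕ => (∑ i ∈ Finset.range n, Y i ω) / n)
      atTop (nhds a) := by
    have := strong_law_ae_real Y hYint hYindep hYid
    rwa [hEY] at this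
  -- convergence in measure
  have havgmeas : ∀ n : ℕ, AEStronglyMeasurable
      (fun ω => (∑ i ∈ Finset.range n, Y i ω) / n) μ := by
    intro n
    exact ((Finset.measurable_sum _ (fun i _ => hYmeas i)).div_const _).aestronglyMeasurable
  have htim : TendstoInMeasure μ (fun n ω => (∑ i ∈ Finset.range n, Y i ω) / n)
      atTop (fun _ => a) :=
    tendstoInMeasure_of_tendsto_ae havgmeas hslln
  have hhalf : 0 < δ / 2 := by linarith
  have hupper := tendstoInMeasure_iff_dist.mp htim (δ / 2) hhalf
  -- eventually, the event is contained in {dist avg a ≥ δ/2}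
  have hsqrt : Tendsto (fun n : ℕ => Real.sqrt n) atTop atTop := by
    have h1 : Tendsto (fun x : ℝ => x ^ (1/2 : ℝ)) atTop atTop :=
      tendsto_rpow_atTop (by norm_num)
    have h2 : Tendsto Real.sqrt atTop atTop := by
      refine h1.congr' ?_
      filter_upwards [eventually_ge_atTop (0:ℝ)] with x hx
      rw [Real.sqrt_eq_rpow]
    exact h2.comp tendsto_natCast_atTop_atTop
  have hdivto : Tendsto (fun n : ℕ => M * q p / Real.sqrt n) atTop (nhds 0) :=
    Tendsto.div_atTop tendsto_const_nhds hsqrt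
  have hev : ∀ᶠ n : ℕ in atTop,
      {ω | ∀ t : ℝ, 0 < F₀ t → F₀ t < 1 →
          Real.sqrt n *
            |(↑n)⁻¹ * ∑ i ∈ Finset.range n, (if X i ω ≤ t then (1:ℝ) else 0) - F₀ t|
            / q (F₀ t) ≤ M}
        ⊆ {ω | δ / 2 ≤ dist ((∑ i ∈ Finset.range n, Y i ω) / n) a} := by
    filter_upwards [hdivto.eventually_le_const hhalf, eventually_ge_atTop 1]
      with n hn hn1
    intro ω hω
    have hsqn : 0 < Real.sqrt n := Real.sqrt_pos.mpr (by exact_mod_cast hn1)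
    have key := hω t₀ hp0 hp1
    -- rewrite in terms of avg
    set S : ℝ := ∑ i ∈ Finset.range n, Y i ω with hS_def
    have havg_eq : (↑n)⁻¹ * ∑ i ∈ Finset.range n, (if X i ω ≤ t₀ then (1:ℝ) else 0)
        = S / n := by
      rw [hS_def, inv_mul_eq_div]
    rw [havg_eq] at key
    -- from key : √n * |S/n - p| / q p ≤ M
    have h1 : Real.sqrt n * |S / n - p| ≤ M * q p := by
      have := (div_le_iff₀ hqp).mp key
      linarith
    have h2 : |S / n - p| ≤ M * q p / Real.sqrt n := by
      rw [le_div_iff₀ hsqn]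
      linarith [h1, mul_comm (Real.sqrt n) |S / n - p|]
    have h3 : |S / n - p| ≤ δ / 2 := h2.trans hn
    have h4 : δ ≤ |S / n - a| + |S / n - p| := by
      have := abs_sub_abs_le_abs_sub (a - p) (a - S / n)
      have habs : |a - S / n - (a - p) + (a - p)| = |a - S/n| := by ring_nf
      calc δ = |a - p| := rfl
        _ ≤ |S / n - a| + |S / n - p| := by
            have := abs_sub (S / n - a) (S / n - p)
            have heq : |(S / n - a) - (S / n - p)| = |a - p| := by
              rw [show (S / n - a) - (S / n - p) = p - a by ring, abs_sub_comm]
            rw [heq] at this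
            linarith [this]
    show δ / 2 ≤ dist (S / n) a
    rw [Real.dist_eq]
    linarith
  -- squeeze
  have hmeaslim : Tendsto (fun n : ℕ =>
      μ {ω | ∀ t : ℝ, 0 < F₀ t → F₀ t < 1 →
          Real.sqrt n *
            |(↑n)⁻¹ * ∑ i ∈ Finset.range n, (if X i ω ≤ t then (1:ℝ) else 0) - F₀ t|
            / q (F₀ t) ≤ M}) atTop (nhds 0) := by
    refine tendsto_of_tendsto_of_tendsto_of_le_of_le' tendsto_const_nhds hupper
      (Eventually.of_forall fun n => zero_le) ?_
    filter_upwards [hev] with n hn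
    exact measure_mono hn
  have := (ENNReal.tendsto_toReal (by simp : (0:ENNReal) ≠ ⊤)).comp hmeaslim
  exact this
end

section
/- Let F be a continuous CDF, X_1, …, X_n i.i.d. with CDF F, 𝔽_n the empirical CDF, and define D_n^{(1)} = √n sup_{t < X_{(1)}} |𝔽_n(t) − F(t)| and D_n^{(3)} = √n sup_{t ≥ X_{(n)}} |𝔽_n(t) − F(t)|. Then D_n^{(1)} has the same distribution as √n U_{(1)} and D_n^{(3)} has the same distribution as √n (1 − U_{(n)}), where U_{(1)}, U_{(n)} are extreme order statistics of a uniform sample of size n; hence both converge to 0 in probability. -/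
open MeasureTheory ProbabilityTheory Filter Real Set

namespace KSTailAux

lemma F_nonneg {F : ℝ → ℝ} (hFmono : Monotone F) (hF0 : Tendsto F atBot (nhds 0)) (t : ℝ) :
    0 ≤ F t :=
  le_of_tendsto hF0 ((eventually_le_atBot t).mono fun _ h => hFmono h)

lemma F_le_one {F : ℝ → ℝ} (hFmono : Monotone F) (hF1 : Tendsto F atTop (nhds 1)) (t : ℝ) :
    F t ≤ 1 :=
  ge_of_tendsto hF1 ((eventually_ge_atTop t).mono fun _ h => hFmono h)

/-- Probability integral transform, `≤` version. -/
lemma meas_comp_le {Ω : Type*} [MeasurableSpace Ω] (μ : Measure Ω) [IsProbabilityMeasure μ]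
    (F : ℝ → ℝ) (hFcont : Continuous F) (hFmono : Monotone F)
    (hF0 : Tendsto F atBot (nhds 0)) (hF1 : Tendsto F atTop (nhds 1))
    (Y : Ω → ℝ) (hY : ∀ t, (μ {ω | Y ω ≤ t}).toReal = F t) (s : ℝ) :
    μ {ω | F (Y ω) ≤ s} = ENNReal.ofReal (min s 1) := by
  by_cases hs1 : 1 ≤ s
  · have : {ω | F (Y ω) ≤ s} = univ := by
      ext ω; simp only [mem_setOf_eq, mem_univ, iff_true]
      exact (F_le_one hFmono hF1 _).trans hs1
    rw [this, min_eq_right hs1, ENNReal.ofReal_one, measure_univ]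
  · push_neg at hs1
    rw [min_eq_left hs1.le]
    by_cases hA : ∃ t, F t ≤ s
    · -- the level set is `Iic a` with `F a = s`
      set A : Set ℝ := {t | F t ≤ s} with hAdef
      have hclosed : IsClosed A := isClosed_Iic.preimage hFcont
      obtain ⟨T, hT⟩ : ∃ T, s < F T := (hF1.eventually (eventually_gt_nhds hs1)).exists
      have hbdd : BddAbove A := by
        refine ⟨T, fun t ht => ?_⟩
        by_contra h
        push_neg at h
        have h2 : F T ≤ F t := hFmono h.le
        have h3 : F t ≤ s := ht
        linarith
      set a := sSup A with ha
      have ha_mem : a ∈ A := hclosed.csSup_mem hA hbdd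
      have hFa : F a = s := by
        refine le_antisymm ha_mem ?_
        by_contra h
        push_neg at h
        obtain ⟨t, htA, hta⟩ : ∃ t, F t < s ∧ a < t := by
          have h1 : ∀ᶠ t in nhds a, F t < s := (hFcont.tendsto a).eventually (eventually_lt_nhds h)
          have h2 : ∀ᶠ t in nhdsWithin a (Ioi a), F t < s ∧ a < t :=
            (h1.filter_mono nhdsWithin_le_nhds).and self_mem_nhdsWithin
          exact h2.exists
        exact absurd (le_csSup hbdd htA.le) (not_le.2 hta)
      have hset : {ω | F (Y ω) ≤ s} = {ω | Y ω ≤ a} := by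
        ext ω
        simp only [mem_setOf_eq]
        constructor
        · intro h; exact le_csSup hbdd h
        · intro h; exact le_trans (hFmono h) ha_mem
      rw [hset, ← hFa, ← hY a, ENNReal.ofReal_toReal (measure_ne_top μ _)]
    · push_neg at hA
      have hs0 : s ≤ 0 := ge_of_tendsto hF0 (Eventually.of_forall fun t => (hA t).le)
      have : {ω | F (Y ω) ≤ s} = ∅ := by
        ext ω; simp only [mem_setOf_eq, mem_empty_iff_false, iff_false, not_le]
        exact hA _
      rw [this, measure_empty, ENNReal.ofReal_eq_zero.2 hs0]

/-- Probability integral transform, `<` version. -/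
lemma meas_comp_lt {Ω : Type*} [MeasurableSpace Ω] (μ : Measure Ω) [IsProbabilityMeasure μ]
    (F : ℝ → ℝ) (hFcont : Continuous F) (hFmono : Monotone F)
    (hF0 : Tendsto F atBot (nhds 0)) (hF1 : Tendsto F atTop (nhds 1))
    (Y : Ω → ℝ) (hYm : Measurable Y) (hY : ∀ t, (μ {ω | Y ω ≤ t}).toReal = F t) (r : ℝ) :
    μ {ω | F (Y ω) < r} = ENNReal.ofReal (min r 1) := by
  by_cases hr : r ≤ 1
  · have hset : {ω | F (Y ω) < r} = ⋃ k : ℕ, {ω | F (Y ω) ≤ r - 1 / (k + 1)} := by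
      ext ω
      simp only [mem_setOf_eq, mem_iUnion]
      constructor
      · intro h
        obtain ⟨k, hk⟩ := exists_nat_one_div_lt (sub_pos.2 h)
        exact ⟨k, by linarith⟩
      · rintro ⟨k, hk⟩
        have : (0:ℝ) < 1 / (k + 1) := by positivity
        linarith
    have hdir : Directed (· ⊆ ·) fun k : ℕ => {ω | F (Y ω) ≤ r - 1 / (k + 1)} := by
      refine directed_of_isDirected_le ?_
      intro k k' hkk ω hω
      simp only [mem_setOf_eq] at hω ⊢
      have h1 : (1:ℝ) / (k' + 1) ≤ 1 / (k + 1) := by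
        apply one_div_le_one_div_of_le (by positivity)
        exact_mod_cast add_le_add_left (Nat.cast_le.2 hkk) 1
      linarith
    have hmeas : ∀ k : ℕ, MeasurableSet {ω | F (Y ω) ≤ r - 1 / (k + 1)} := fun k =>
      (hFcont.measurable.comp hYm) measurableSet_Iic
    rw [hset, Directed.measure_iUnion hdir]
    have hval : ∀ k : ℕ, μ {ω | F (Y ω) ≤ r - 1 / (k + 1)}
        = ENNReal.ofReal (r - 1 / (k + 1)) := by
      intro k
      rw [meas_comp_le μ F hFcont hFmono hF0 hF1 Y hY, min_eq_left]
      have : (0:ℝ) < 1 / (k + 1) := by positivity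
      linarith
    simp only [hval]
    have hmono : Monotone fun k : ℕ => ENNReal.ofReal (r - 1 / (k + 1)) := by
      intro k k' hkk
      apply ENNReal.ofReal_le_ofReal
      have h1 : (1:ℝ) / (k' + 1) ≤ 1 / (k + 1) := by
        apply one_div_le_one_div_of_le (by positivity)
        exact_mod_cast add_le_add_left (Nat.cast_le.2 hkk) 1
      linarith
    have h1 : Tendsto (fun k : ℕ => ENNReal.ofReal (r - 1 / (k + 1)))
        atTop (nhds (ENNReal.ofReal r)) := by
      apply (ENNReal.continuous_ofReal.tendsto r).comp
      have := tendsto_one_div_add_atTop_nhds_zero_nat (𝕜 := ℝ)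
      have h2 : Tendsto (fun k : ℕ => r - 1 / (k + 1)) atTop (nhds (r - 0)) :=
        tendsto_const_nhds.sub this
      simpa using h2
    rw [tendsto_nhds_unique (tendsto_atTop_iSup hmono) h1, min_eq_left hr]
  · push_neg at hr
    have : {ω | F (Y ω) < r} = univ := by
      ext ω; simp only [mem_setOf_eq, mem_univ, iff_true]
      exact lt_of_le_of_lt (F_le_one hFmono hF1 _) hr
    rw [this, measure_univ, min_eq_right hr.le, ENNReal.ofReal_one]


lemma unif_le {Ω' : Type*} [MeasurableSpace Ω'] (μ' : Measure Ω')
    (V : Ω' → ℝ) (hVm : Measurable V)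
    (hV : Measure.map V μ' = volume.restrict (Ioo (0:ℝ) 1)) (s : ℝ) :
    μ' {ω | V ω ≤ s} = ENNReal.ofReal (min s 1) := by
  have h0 : μ' {ω | V ω ≤ s} = volume (Iic s ∩ Ioo (0:ℝ) 1) := by
    rw [← Measure.restrict_apply measurableSet_Iic, ← hV,
      Measure.map_apply hVm measurableSet_Iic]
    rfl
  rw [h0]
  rcases le_or_gt s 0 with h | h
  · have : Iic s ∩ Ioo (0:ℝ) 1 = ∅ := by
      ext t; simp only [mem_inter_iff, mem_Iic, mem_Ioo, mem_empty_iff_false, iff_false]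
      rintro ⟨h1, h2, h3⟩; linarith
    rw [this, measure_empty, min_eq_left (by linarith), ENNReal.ofReal_eq_zero.2 h]
  · rcases lt_or_ge s 1 with h1 | h1
    · have : Iic s ∩ Ioo (0:ℝ) 1 = Ioc 0 s := by
        ext t; simp only [mem_inter_iff, mem_Iic, mem_Ioo, mem_Ioc]
        constructor
        · rintro ⟨ha, hb, hc⟩; exact ⟨hb, ha⟩
        · rintro ⟨ha, hb⟩; exact ⟨hb, ha, by linarith⟩
      rw [this, Real.volume_Ioc, min_eq_left h1.le, sub_zero]
    · have : Iic s ∩ Ioo (0:ℝ) 1 = Ioo 0 1 := by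
        apply inter_eq_self_of_subset_right
        rintro t ⟨ha, hb⟩; exact le_trans hb.le h1
      rw [this, Real.volume_Ioo, min_eq_right h1, sub_zero]

lemma unif_lt {Ω' : Type*} [MeasurableSpace Ω'] (μ' : Measure Ω')
    (V : Ω' → ℝ) (hVm : Measurable V)
    (hV : Measure.map V μ' = volume.restrict (Ioo (0:ℝ) 1)) (r : ℝ) :
    μ' {ω | V ω < r} = ENNReal.ofReal (min r 1) := by
  have h0 : μ' {ω | V ω < r} = volume (Iio r ∩ Ioo (0:ℝ) 1) := by
    rw [← Measure.restrict_apply measurableSet_Iio, ← hV,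
      Measure.map_apply hVm measurableSet_Iio]
    rfl
  rw [h0]
  rcases le_or_gt r 0 with h | h
  · have : Iio r ∩ Ioo (0:ℝ) 1 = ∅ := by
      ext t; simp only [mem_inter_iff, mem_Iio, mem_Ioo, mem_empty_iff_false, iff_false]
      rintro ⟨h1, h2, h3⟩; linarith
    rw [this, measure_empty, min_eq_left (by linarith), ENNReal.ofReal_eq_zero.2 h]
  · rcases le_or_gt r 1 with h1 | h1
    · have : Iio r ∩ Ioo (0:ℝ) 1 = Ioo 0 r := by
        ext t; simp only [mem_inter_iff, mem_Iio, mem_Ioo]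
        constructor
        · rintro ⟨ha, hb, hc⟩; exact ⟨hb, ha⟩
        · rintro ⟨ha, hb⟩; exact ⟨hb, ha, by linarith⟩
      rw [this, Real.volume_Ioo, min_eq_left h1, sub_zero]
    · have : Iio r ∩ Ioo (0:ℝ) 1 = Ioo 0 1 := by
        apply inter_eq_self_of_subset_right
        rintro t ⟨ha, hb⟩; exact lt_trans hb h1
      rw [this, Real.volume_Ioo, min_eq_right h1.le, sub_zero]

lemma meas_iInter_range {Ω : Type*} [MeasurableSpace Ω] (μ : Measure Ω)
    (Y : ℕ → Ω → ℝ)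
    (hind : iIndepFun Y μ) (B : Set ℝ) (hB : MeasurableSet B) (n : ℕ) :
    μ (⋂ i ∈ Finset.range n, Y i ⁻¹' B) = ∏ i ∈ Finset.range n, μ (Y i ⁻¹' B) :=
  hind.measure_inter_preimage_eq_mul (Finset.range n) (sets := fun _ => B) (fun _ _ => hB)

section MinMax

variable {n : ℕ} {F : ℝ → ℝ}

lemma le_F_iInf_iff (hn : 1 ≤ n) (hF : Monotone F) (g : Fin n → ℝ) (c : ℝ) :
    c ≤ F (⨅ i, g i) ↔ ∀ i, c ≤ F (g i) := by
  haveI : Nonempty (Fin n) := ⟨⟨0, hn⟩⟩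
  obtain ⟨i0, hi0⟩ := Finite.exists_min g
  have hinf : (⨅ i, g i) = g i0 :=
    le_antisymm (ciInf_le (Set.Finite.bddBelow (finite_range g)) i0) (le_ciInf hi0)
  constructor
  · intro h i
    exact h.trans (hF (ciInf_le (Set.Finite.bddBelow (finite_range g)) i))
  · intro h; rw [hinf]; exact h i0

lemma lt_F_iInf_iff (hn : 1 ≤ n) (hF : Monotone F) (g : Fin n → ℝ) (c : ℝ) :
    c < F (⨅ i, g i) ↔ ∀ i, c < F (g i) := by
  haveI : Nonempty (Fin n) := ⟨⟨0, hn⟩⟩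
  obtain ⟨i0, hi0⟩ := Finite.exists_min g
  have hinf : (⨅ i, g i) = g i0 :=
    le_antisymm (ciInf_le (Set.Finite.bddBelow (finite_range g)) i0) (le_ciInf hi0)
  constructor
  · intro h i
    exact h.trans_le (hF (ciInf_le (Set.Finite.bddBelow (finite_range g)) i))
  · intro h; rw [hinf]; exact h i0

lemma F_iSup_le_iff (hn : 1 ≤ n) (hF : Monotone F) (g : Fin n → ℝ) (c : ℝ) :
    F (⨆ i, g i) ≤ c ↔ ∀ i, F (g i) ≤ c := by
  haveI : Nonempty (Fin n) := ⟨⟨0, hn⟩⟩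
  obtain ⟨i0, hi0⟩ := Finite.exists_max g
  have hsup : (⨆ i, g i) = g i0 :=
    le_antisymm (ciSup_le hi0) (le_ciSup (Set.Finite.bddAbove (finite_range g)) i0)
  constructor
  · intro h i
    exact le_trans (hF (le_ciSup (Set.Finite.bddAbove (finite_range g)) i)) h
  · intro h; rw [hsup]; exact h i0

lemma F_iSup_lt_iff (hn : 1 ≤ n) (hF : Monotone F) (g : Fin n → ℝ) (c : ℝ) :
    F (⨆ i, g i) < c ↔ ∀ i, F (g i) < c := by
  haveI : Nonempty (Fin n) := ⟨⟨0, hn⟩⟩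
  obtain ⟨i0, hi0⟩ := Finite.exists_max g
  have hsup : (⨆ i, g i) = g i0 :=
    le_antisymm (ciSup_le hi0) (le_ciSup (Set.Finite.bddAbove (finite_range g)) i0)
  constructor
  · intro h i
    exact lt_of_le_of_lt (hF (le_ciSup (Set.Finite.bddAbove (finite_range g)) i)) h
  · intro h; rw [hsup]; exact h i0

end MinMax

lemma csSup_image_F_Iio {F : ℝ → ℝ} (hFcont : Continuous F) (hFmono : Monotone F) (m : ℝ) :
    sSup (F '' Iio m) = F m := by
  apply IsLUB.csSup_eq _ ((nonempty_Iio (a := m)).image F)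
  constructor
  · rintro _ ⟨t, ht, rfl⟩
    exact hFmono (le_of_lt ht)
  · intro b hb
    have htend : Tendsto F (nhdsWithin m (Iio m)) (nhds (F m)) :=
      (hFcont.tendsto m).mono_left nhdsWithin_le_nhds
    refine le_of_tendsto htend ?_
    filter_upwards [self_mem_nhdsWithin] with t ht
    exact hb (mem_image_of_mem F ht)

lemma csSup_image_sub_Ici {F : ℝ → ℝ} (hFmono : Monotone F) (M : ℝ) :
    sSup ((fun t => 1 - F t) '' Ici M) = 1 - F M := by
  apply IsGreatest.csSup_eq
  constructor
  · exact ⟨M, self_mem_Ici, rfl⟩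
  · rintro _ ⟨t, ht, rfl⟩
    have := hFmono ht
    simp only []
    linarith

lemma tendsto_sqrt_nat : Tendsto (fun n : ℕ => Real.sqrt n) atTop atTop := by
  apply tendsto_atTop_atTop.2
  intro b
  refine ⟨⌈b ^ 2⌉₊, fun n hn => ?_⟩
  rcases le_or_gt b 0 with hb | hb
  · exact hb.trans (Real.sqrt_nonneg _)
  · have h1 : b ^ 2 ≤ (n : ℝ) := le_trans (Nat.le_ceil _) (by exact_mod_cast hn)
    calc b = Real.sqrt (b ^ 2) := (Real.sqrt_sq hb.le).symm
      _ ≤ Real.sqrt n := Real.sqrt_le_sqrt h1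

lemma tendsto_pow_zero {ε : ℝ} (hε : 0 < ε) :
    Tendsto (fun n : ℕ => (1 - ε / Real.sqrt n) ^ n) atTop (nhds 0) := by
  have hexp : Tendsto (fun n : ℕ => Real.exp (-(ε * Real.sqrt n))) atTop (nhds 0) := by
    apply Real.tendsto_exp_atBot.comp
    apply tendsto_neg_atBot_iff.2
    exact (tendsto_sqrt_nat.const_mul_atTop hε)
  apply squeeze_zero' ?_ ?_ hexp
  · filter_upwards [tendsto_sqrt_nat.eventually_ge_atTop ε, eventually_ge_atTop 1] with n hnε hn1
    have hn0 : (0:ℝ) < n := by exact_mod_cast Nat.lt_of_lt_of_le Nat.zero_lt_one hn1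
    have hs_pos : 0 < Real.sqrt n := Real.sqrt_pos.2 hn0
    have h1 : ε / Real.sqrt n ≤ 1 := (div_le_one hs_pos).2 hnε
    exact pow_nonneg (by linarith) n
  · filter_upwards [tendsto_sqrt_nat.eventually_ge_atTop ε, eventually_ge_atTop 1] with n hnε hn1
    have hn0 : (0:ℝ) < n := by exact_mod_cast Nat.lt_of_lt_of_le Nat.zero_lt_one hn1
    have hs_pos : 0 < Real.sqrt n := Real.sqrt_pos.2 hn0
    have h1 : 0 ≤ 1 - ε / Real.sqrt n := by
      have : ε / Real.sqrt n ≤ 1 := (div_le_one hs_pos).2 hnε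
      linarith
    have h2 : 1 - ε / Real.sqrt n ≤ Real.exp (-(ε / Real.sqrt n)) := by
      have := Real.add_one_le_exp (-(ε / Real.sqrt n)); linarith
    calc (1 - ε / Real.sqrt n) ^ n ≤ Real.exp (-(ε / Real.sqrt n)) ^ n :=
        pow_le_pow_left₀ h1 h2 n
      _ = Real.exp (-(ε * Real.sqrt n)) := by
        rw [← Real.exp_nat_mul]
        congr 1
        have hsq : Real.sqrt n * Real.sqrt n = n := Real.mul_self_sqrt (Nat.cast_nonneg n)
        field_simp
        nlinarith [hsq]

end KSTailAux

namespace KSTailAux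

lemma lt_iInf_iff {n : ℕ} (hn : 1 ≤ n) (g : Fin n → ℝ) (c : ℝ) :
    c < (⨅ i, g i) ↔ ∀ i, c < g i :=
  lt_F_iInf_iff hn monotone_id g c

lemma le_iInf_iff' {n : ℕ} (hn : 1 ≤ n) (g : Fin n → ℝ) (c : ℝ) :
    c ≤ (⨅ i, g i) ↔ ∀ i, c ≤ g i :=
  le_F_iInf_iff hn monotone_id g c

lemma iSup_lt_iff {n : ℕ} (hn : 1 ≤ n) (g : Fin n → ℝ) (c : ℝ) :
    (⨆ i, g i) < c ↔ ∀ i, g i < c :=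
  F_iSup_lt_iff hn monotone_id g c

lemma iSup_le_iff' {n : ℕ} (hn : 1 ≤ n) (g : Fin n → ℝ) (c : ℝ) :
    (⨆ i, g i) ≤ c ↔ ∀ i, g i ≤ c :=
  F_iSup_le_iff hn monotone_id g c

end KSTailAux
theorem ks_tail_pieces {Ω Ω' : Type*} [MeasurableSpace Ω] [MeasurableSpace Ω']
    (μ : Measure Ω) [IsProbabilityMeasure μ]
    (μ' : Measure Ω') [IsProbabilityMeasure μ']
    (F : ℝ → ℝ) (hFcont : Continuous F) (hFmono : Monotone F)
    (hF0 : Tendsto F atBot (nhds 0)) (hF1 : Tendsto F atTop (nhds 1))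
    (X : ℕ → Ω → ℝ) (hXmeas : ∀ i, Measurable (X i))
    (hXindep : iIndepFun X μ)
    (hXcdf : ∀ i t, (μ {ω | X i ω ≤ t}).toReal = F t)
    (U : ℕ → Ω' → ℝ) (hUmeas : ∀ i, Measurable (U i))
    (hUindep : iIndepFun U μ')
    (hUdist : ∀ i, Measure.map (U i) μ' = MeasureTheory.volume.restrict (Set.Ioo (0:ℝ) 1))
    (Fn : ℕ → ℝ → Ω → ℝ)
    (hFn : ∀ n t ω, Fn n t ω =
      (↑n)⁻¹ * ∑ i ∈ Finset.range n, (if X i ω ≤ t then (1:ℝ) else 0))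
    (D1 D3 : ℕ → Ω → ℝ)
    (hD1 : ∀ n ω, D1 n ω =
      Real.sqrt n * sSup ((fun t => |Fn n t ω - F t|) '' Set.Iio (⨅ i : Fin n, X i ω)))
    (hD3 : ∀ n ω, D3 n ω =
      Real.sqrt n * sSup ((fun t => |Fn n t ω - F t|) '' Set.Ici (⨆ i : Fin n, X i ω))) :
    (∀ n : ℕ, 1 ≤ n →
      Measure.map (D1 n) μ =
        Measure.map (fun ω' => Real.sqrt n * (⨅ i : Fin n, U i ω')) μ' ∧
      Measure.map (D3 n) μ =
        Measure.map (fun ω' => Real.sqrt n * (1 - ⨆ i : Fin n, U i ω')) μ') ∧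
    (∀ ε : ℝ, 0 < ε →
      Tendsto (fun n : ℕ => (μ {ω | ε ≤ D1 n ω}).toReal) atTop (nhds 0) ∧
      Tendsto (fun n : ℕ => (μ {ω | ε ≤ D3 n ω}).toReal) atTop (nhds 0)) := by
  classical
  have hFnn := KSTailAux.F_nonneg hFmono hF0
  have hFle1 := KSTailAux.F_le_one hFmono hF1
  -- pointwise formulas for D1 and D3
  have hD1fun : ∀ n, 1 ≤ n → ∀ ω, D1 n ω = Real.sqrt n * F (⨅ i : Fin n, X i ω) := by
    intro n hn ω
    haveI : Nonempty (Fin n) := ⟨⟨0, hn⟩⟩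
    rw [hD1]
    congr 1
    set m := ⨅ i : Fin n, X i ω with hm
    have himg : (fun t => |Fn n t ω - F t|) '' Set.Iio m = F '' Set.Iio m := by
      apply image_congr
      intro t ht
      have htm : t < m := ht
      have h0 : Fn n t ω = 0 := by
        rw [hFn]
        have hz : ∀ i ∈ Finset.range n, (if X i ω ≤ t then (1:ℝ) else 0) = 0 := by
          intro i hi
          rw [if_neg]
          have hmle : m ≤ X i ω := by
            rw [hm]
            exact ciInf_le (f := fun j : Fin n => X (j : ℕ) ω)
              (Set.Finite.bddBelow (finite_range _)) (⟨i, Finset.mem_range.1 hi⟩ : Fin n)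
          push_neg
          linarith
        rw [Finset.sum_congr rfl hz, Finset.sum_const_zero, mul_zero]
      rw [h0, zero_sub, abs_neg, abs_of_nonneg (hFnn t)]
    rw [himg, KSTailAux.csSup_image_F_Iio hFcont hFmono m]
  have hD3fun : ∀ n, 1 ≤ n → ∀ ω, D3 n ω = Real.sqrt n * (1 - F (⨆ i : Fin n, X i ω)) := by
    intro n hn ω
    haveI : Nonempty (Fin n) := ⟨⟨0, hn⟩⟩
    rw [hD3]
    congr 1
    set M := ⨆ i : Fin n, X i ω with hM
    have himg : (fun t => |Fn n t ω - F t|) '' Set.Ici M = (fun t => 1 - F t) '' Set.Ici M := by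
      apply image_congr
      intro t ht
      have h1 : Fn n t ω = 1 := by
        rw [hFn]
        have hz : ∀ i ∈ Finset.range n, (if X i ω ≤ t then (1:ℝ) else 0) = 1 := by
          intro i hi
          rw [if_pos]
          have hle : X i ω ≤ M := by
            rw [hM]
            exact le_ciSup (f := fun j : Fin n => X (j : ℕ) ω)
              (Set.Finite.bddAbove (finite_range _)) (⟨i, Finset.mem_range.1 hi⟩ : Fin n)
          exact hle.trans ht
        rw [Finset.sum_congr rfl hz, Finset.sum_const, Finset.card_range, nsmul_eq_mul,
          mul_one, inv_mul_cancel₀]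
        exact Nat.cast_ne_zero.2 (by omega)
      rw [h1, abs_of_nonneg (by linarith [hFle1 t])]
    rw [himg, KSTailAux.csSup_image_sub_Ici hFmono M]
  constructor
  · intro n hn
    haveI hNE : Nonempty (Fin n) := ⟨⟨0, hn⟩⟩
    have hn0 : (0:ℝ) < n := by exact_mod_cast hn
    have hsq : (0:ℝ) < Real.sqrt n := Real.sqrt_pos.2 hn0
    have hD1eq : D1 n = fun ω => Real.sqrt n * F (⨅ i : Fin n, X i ω) := funext (hD1fun n hn)
    have hD3eq : D3 n = fun ω => Real.sqrt n * (1 - F (⨆ i : Fin n, X i ω)) :=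
      funext (hD3fun n hn)
    have hmin : Measurable fun ω => ⨅ i : Fin n, X i ω := by
      exact Measurable.iInf (fun i : Fin n => hXmeas i)
    have hmax : Measurable fun ω => ⨆ i : Fin n, X i ω := by
      exact Measurable.iSup (fun i : Fin n => hXmeas i)
    have hUmin : Measurable fun ω' => ⨅ i : Fin n, U i ω' := by
      exact Measurable.iInf (fun i : Fin n => hUmeas i)
    have hUmax : Measurable fun ω' => ⨆ i : Fin n, U i ω' := by
      exact Measurable.iSup (fun i : Fin n => hUmeas i)
    have hmD1 : Measurable (D1 n) := by
      rw [hD1eq]; exact measurable_const.mul (hFcont.measurable.comp hmin)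
    have hmD3 : Measurable (D3 n) := by
      rw [hD3eq]
      exact measurable_const.mul (measurable_const.sub (hFcont.measurable.comp hmax))
    have hmRU1 : Measurable fun ω' => Real.sqrt n * (⨅ i : Fin n, U i ω') :=
      measurable_const.mul hUmin
    have hmRU3 : Measurable fun ω' => Real.sqrt n * (1 - ⨆ i : Fin n, U i ω') :=
      measurable_const.mul (measurable_const.sub hUmax)
    constructor
    · -- D1 distribution
      haveI := Measure.isProbabilityMeasure_map (μ := μ) hmD1.aemeasurable
      haveI := Measure.isProbabilityMeasure_map (μ := μ') hmRU1.aemeasurable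
      apply Measure.ext_of_Iic
      intro x
      rw [Measure.map_apply hmD1 measurableSet_Iic, Measure.map_apply hmRU1 measurableSet_Iic]
      set s := x / Real.sqrt n with hs
      have hL1 : D1 n ⁻¹' Set.Iic x = {ω | F (⨅ i : Fin n, X i ω) ≤ s} := by
        ext ω
        simp only [mem_preimage, mem_Iic, mem_setOf_eq]
        rw [hD1fun n hn ω, mul_comm, ← le_div_iff₀ hsq, ← hs]
      have hR1 : (fun ω' => Real.sqrt n * (⨅ i : Fin n, U i ω')) ⁻¹' Set.Iic x
          = {ω' | (⨅ i : Fin n, U i ω') ≤ s} := by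
        ext ω'
        simp only [mem_preimage, mem_Iic, mem_setOf_eq]
        rw [mul_comm, ← le_div_iff₀ hsq, ← hs]
      have hcompL : {ω | F (⨅ i : Fin n, X i ω) ≤ s}ᶜ
          = ⋂ i ∈ Finset.range n, X i ⁻¹' (F ⁻¹' Set.Ioi s) := by
        ext ω
        simp only [mem_compl_iff, mem_setOf_eq, not_le, mem_iInter, mem_preimage, mem_Ioi,
          Finset.mem_range]
        rw [KSTailAux.lt_F_iInf_iff hn hFmono]
        constructor
        · intro h i hi; exact h ⟨i, hi⟩
        · intro h i; exact h i i.isLt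
      have hcompR : {ω' | (⨅ i : Fin n, U i ω') ≤ s}ᶜ
          = ⋂ i ∈ Finset.range n, U i ⁻¹' Set.Ioi s := by
        ext ω'
        simp only [mem_compl_iff, mem_setOf_eq, not_le, mem_iInter, mem_preimage, mem_Ioi,
          Finset.mem_range]
        rw [KSTailAux.lt_iInf_iff hn]
        constructor
        · intro h i hi; exact h ⟨i, hi⟩
        · intro h i; exact h i i.isLt
      have hmeasL : MeasurableSet {ω | F (⨅ i : Fin n, X i ω) ≤ s} :=
        (hFcont.measurable.comp hmin) measurableSet_Iic
      have hmeasR : MeasurableSet {ω' | (⨅ i : Fin n, U i ω') ≤ s} := hUmin measurableSet_Iic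
      rw [hL1, hR1, ← compl_compl {ω | F (⨅ i : Fin n, X i ω) ≤ s},
        prob_compl_eq_one_sub hmeasL.compl, hcompL,
        ← compl_compl {ω' | (⨅ i : Fin n, U i ω') ≤ s},
        prob_compl_eq_one_sub hmeasR.compl, hcompR,
        KSTailAux.meas_iInter_range μ X hXindep _ (hFcont.measurable measurableSet_Ioi) n,
        KSTailAux.meas_iInter_range μ' U hUindep _ measurableSet_Ioi n]
      have hXfac : ∀ i ∈ Finset.range n,
          μ (X i ⁻¹' (F ⁻¹' Set.Ioi s)) = 1 - ENNReal.ofReal (min s 1) := by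
        intro i _
        have hset : X i ⁻¹' (F ⁻¹' Set.Ioi s) = {ω | F (X i ω) ≤ s}ᶜ := by
          ext ω; simp [not_le]
        have hm : MeasurableSet {ω | F (X i ω) ≤ s} :=
          (hFcont.measurable.comp (hXmeas i)) measurableSet_Iic
        rw [hset, prob_compl_eq_one_sub hm,
          KSTailAux.meas_comp_le μ F hFcont hFmono hF0 hF1 (X i) (hXcdf i)]
      have hUfac : ∀ i ∈ Finset.range n,
          μ' (U i ⁻¹' Set.Ioi s) = 1 - ENNReal.ofReal (min s 1) := by
        intro i _
        have hset : U i ⁻¹' Set.Ioi s = {ω' | U i ω' ≤ s}ᶜ := by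
          ext ω'; simp [not_le]
        have hm : MeasurableSet {ω' | U i ω' ≤ s} := (hUmeas i) measurableSet_Iic
        rw [hset, prob_compl_eq_one_sub hm,
          KSTailAux.unif_le μ' (U i) (hUmeas i) (hUdist i)]
      rw [Finset.prod_congr rfl hXfac, Finset.prod_congr rfl hUfac]
    · -- D3 distribution
      haveI := Measure.isProbabilityMeasure_map (μ := μ) hmD3.aemeasurable
      haveI := Measure.isProbabilityMeasure_map (μ := μ') hmRU3.aemeasurable
      apply Measure.ext_of_Iic
      intro x
      rw [Measure.map_apply hmD3 measurableSet_Iic, Measure.map_apply hmRU3 measurableSet_Iic]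
      set r := 1 - x / Real.sqrt n with hr
      have hL3 : D3 n ⁻¹' Set.Iic x = {ω | r ≤ F (⨆ i : Fin n, X i ω)} := by
        ext ω
        simp only [mem_preimage, mem_Iic, mem_setOf_eq]
        rw [hD3fun n hn ω, mul_comm, ← le_div_iff₀ hsq, sub_le_comm, ← hr]
      have hR3 : (fun ω' => Real.sqrt n * (1 - ⨆ i : Fin n, U i ω')) ⁻¹' Set.Iic x
          = {ω' | r ≤ ⨆ i : Fin n, U i ω'} := by
        ext ω'
        simp only [mem_preimage, mem_Iic, mem_setOf_eq]
        rw [mul_comm, ← le_div_iff₀ hsq, sub_le_comm, ← hr]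
      have hcompL : {ω | r ≤ F (⨆ i : Fin n, X i ω)}ᶜ
          = ⋂ i ∈ Finset.range n, X i ⁻¹' (F ⁻¹' Set.Iio r) := by
        ext ω
        simp only [mem_compl_iff, mem_setOf_eq, not_le, mem_iInter, mem_preimage, mem_Iio,
          Finset.mem_range]
        rw [KSTailAux.F_iSup_lt_iff hn hFmono]
        constructor
        · intro h i hi; exact h ⟨i, hi⟩
        · intro h i; exact h i i.isLt
      have hcompR : {ω' | r ≤ ⨆ i : Fin n, U i ω'}ᶜ
          = ⋂ i ∈ Finset.range n, U i ⁻¹' Set.Iio r := by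
        ext ω'
        simp only [mem_compl_iff, mem_setOf_eq, not_le, mem_iInter, mem_preimage, mem_Iio,
          Finset.mem_range]
        rw [KSTailAux.iSup_lt_iff hn]
        constructor
        · intro h i hi; exact h ⟨i, hi⟩
        · intro h i; exact h i i.isLt
      have hmeasL : MeasurableSet {ω | r ≤ F (⨆ i : Fin n, X i ω)} :=
        (hFcont.measurable.comp hmax) measurableSet_Ici
      have hmeasR : MeasurableSet {ω' | r ≤ ⨆ i : Fin n, U i ω'} := hUmax measurableSet_Ici
      rw [hL3, hR3, ← compl_compl {ω | r ≤ F (⨆ i : Fin n, X i ω)},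
        prob_compl_eq_one_sub hmeasL.compl, hcompL,
        ← compl_compl {ω' | r ≤ ⨆ i : Fin n, U i ω'},
        prob_compl_eq_one_sub hmeasR.compl, hcompR,
        KSTailAux.meas_iInter_range μ X hXindep _ (hFcont.measurable measurableSet_Iio) n,
        KSTailAux.meas_iInter_range μ' U hUindep _ measurableSet_Iio n]
      have hXfac : ∀ i ∈ Finset.range n,
          μ (X i ⁻¹' (F ⁻¹' Set.Iio r)) = ENNReal.ofReal (min r 1) := by
        intro i _
        have hset : X i ⁻¹' (F ⁻¹' Set.Iio r) = {ω | F (X i ω) < r} := rfl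
        rw [hset, KSTailAux.meas_comp_lt μ F hFcont hFmono hF0 hF1 (X i) (hXmeas i) (hXcdf i)]
      have hUfac : ∀ i ∈ Finset.range n,
          μ' (U i ⁻¹' Set.Iio r) = ENNReal.ofReal (min r 1) := by
        intro i _
        have hset : U i ⁻¹' Set.Iio r = {ω' | U i ω' < r} := rfl
        rw [hset, KSTailAux.unif_lt μ' (U i) (hUmeas i) (hUdist i)]
      rw [Finset.prod_congr rfl hXfac, Finset.prod_congr rfl hUfac]
  · intro ε hε
    constructor
    · -- D1 tail
      have key : (fun n : ℕ => (μ {ω | ε ≤ D1 n ω}).toReal) =ᶠ[atTop]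
          (fun n : ℕ => (1 - ε / Real.sqrt n) ^ n) := by
        filter_upwards [eventually_ge_atTop 1, KSTailAux.tendsto_sqrt_nat.eventually_ge_atTop ε]
          with n hn hnε
        haveI : Nonempty (Fin n) := ⟨⟨0, hn⟩⟩
        have hn0 : (0:ℝ) < n := by exact_mod_cast hn
        have hsq : (0:ℝ) < Real.sqrt n := Real.sqrt_pos.2 hn0
        set s := ε / Real.sqrt n with hs
        have hs0 : 0 < s := div_pos hε hsq
        have hs1 : s ≤ 1 := by rw [hs]; exact (div_le_one hsq).2 hnε
        have hset : {ω | ε ≤ D1 n ω} = ⋂ i ∈ Finset.range n, X i ⁻¹' (F ⁻¹' Set.Ici s) := by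
          ext ω
          simp only [mem_setOf_eq, mem_iInter, mem_preimage, mem_Ici, Finset.mem_range]
          rw [hD1fun n hn ω, mul_comm, ← div_le_iff₀ hsq, ← hs,
            KSTailAux.le_F_iInf_iff hn hFmono]
          constructor
          · intro h i hi; exact h ⟨i, hi⟩
          · intro h i; exact h i i.isLt
        have hfac : ∀ i ∈ Finset.range n,
            μ (X i ⁻¹' (F ⁻¹' Set.Ici s)) = ENNReal.ofReal (1 - s) := by
          intro i _
          have h1 : X i ⁻¹' (F ⁻¹' Set.Ici s) = {ω | F (X i ω) < s}ᶜ := by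
            ext ω; simp [not_lt]
          have hm : MeasurableSet {ω | F (X i ω) < s} :=
            (hFcont.measurable.comp (hXmeas i)) measurableSet_Iio
          rw [h1, prob_compl_eq_one_sub hm,
            KSTailAux.meas_comp_lt μ F hFcont hFmono hF0 hF1 (X i) (hXmeas i) (hXcdf i),
            min_eq_left hs1, ← ENNReal.ofReal_one, ← ENNReal.ofReal_sub _ hs0.le]
        rw [hset, KSTailAux.meas_iInter_range μ X hXindep _ (hFcont.measurable measurableSet_Ici) n,
          Finset.prod_congr rfl hfac, Finset.prod_const, Finset.card_range,
          ← ENNReal.ofReal_pow (by linarith), ENNReal.toReal_ofReal (pow_nonneg (by linarith) n)]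
      exact (KSTailAux.tendsto_pow_zero hε).congr' key.symm
    · -- D3 tail
      have key : (fun n : ℕ => (μ {ω | ε ≤ D3 n ω}).toReal) =ᶠ[atTop]
          (fun n : ℕ => (1 - ε / Real.sqrt n) ^ n) := by
        filter_upwards [eventually_ge_atTop 1, KSTailAux.tendsto_sqrt_nat.eventually_ge_atTop ε]
          with n hn hnε
        haveI : Nonempty (Fin n) := ⟨⟨0, hn⟩⟩
        have hn0 : (0:ℝ) < n := by exact_mod_cast hn
        have hsq : (0:ℝ) < Real.sqrt n := Real.sqrt_pos.2 hn0
        set s := ε / Real.sqrt n with hs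
        have hs0 : 0 < s := div_pos hε hsq
        have hs1 : s ≤ 1 := by rw [hs]; exact (div_le_one hsq).2 hnε
        have hset : {ω | ε ≤ D3 n ω}
            = ⋂ i ∈ Finset.range n, X i ⁻¹' (F ⁻¹' Set.Iic (1 - s)) := by
          ext ω
          simp only [mem_setOf_eq, mem_iInter, mem_preimage, mem_Iic, Finset.mem_range]
          rw [hD3fun n hn ω, mul_comm, ← div_le_iff₀ hsq, ← hs, le_sub_comm,
            KSTailAux.F_iSup_le_iff hn hFmono]
          constructor
          · intro h i hi; exact h ⟨i, hi⟩
          · intro h i; exact h i i.isLt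
        have hfac : ∀ i ∈ Finset.range n,
            μ (X i ⁻¹' (F ⁻¹' Set.Iic (1 - s))) = ENNReal.ofReal (1 - s) := by
          intro i _
          have h1 : X i ⁻¹' (F ⁻¹' Set.Iic (1 - s)) = {ω | F (X i ω) ≤ 1 - s} := rfl
          rw [h1, KSTailAux.meas_comp_le μ F hFcont hFmono hF0 hF1 (X i) (hXcdf i),
            min_eq_left (by linarith)]
        rw [hset, KSTailAux.meas_iInter_range μ X hXindep _ (hFcont.measurable measurableSet_Iic) n,
          Finset.prod_congr rfl hfac, Finset.prod_const, Finset.card_range,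
          ← ENNReal.ofReal_pow (by linarith), ENNReal.toReal_ofReal (pow_nonneg (by linarith) n)]
      exact (KSTailAux.tendsto_pow_zero hε).congr' key.symm
end
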